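/- Let s ∈ (0, 1) with s ≠ 1/2, and assume that either s > 1/2 or t₁(s) = 7 + 3^{3−2s} − 2^{5−2s} ≤ 0 (i.e. s lies in [s₀, 1) where s₀ is the unique zero of t₁ in (0,1/2)). Let h > 0, let N ≥ 2 be an integer, and let S be the (N−1)×(N−1) matrix with entries S_{kj} = A_s h^{1−2s} t_{|k−j|}(s). Then for all 1 ≤ k, j ≤ N−1: S_{kk} > 0; S_{kj} ≤ 0 for k ≠ j, with S_{kj} < 0 whenever |k−j| ≥ 2, and S_{kj} < 0 also when |k−j| = 1 provided t₁(s) ≠ 0; and S is strictly diagonally dominant: S_{kk} > Σ_{j≠k} |S_{kj}| for every 1 ≤ k ≤ N−1. -/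

import Mathlib

/-- `t_p(s)`, with the convention `0^(3-2s) = 0` (automatic for `rpow`). -/
noncomputable def tFn (s : ℝ) (p : ℕ) : ℝ :=
  |(p : ℝ) - 2| ^ (3 - 2 * s) - 4 * |(p : ℝ) - 1| ^ (3 - 2 * s) + 6 * (p : ℝ) ^ (3 - 2 * s)
    - 4 * ((p : ℝ) + 1) ^ (3 - 2 * s) + ((p : ℝ) + 2) ^ (3 - 2 * s)

/-- `t₁(s) = 7 + 3^(3-2s) - 2^(5-2s)`. -/
noncomputable def t1 (s : ℝ) : ℝ := 7 + (3 : ℝ) ^ (3 - 2 * s) - (2 : ℝ) ^ (5 - 2 * s)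

/-- `A_s = 1/(2 Γ(4-2s) cos(sπ))`. -/
noncomputable def Acoef (s : ℝ) : ℝ := 1 / (2 * Real.Gamma (4 - 2 * s) * Real.cos (s * Real.pi))


open Real Set

lemma deriv2_rpow (β : ℝ) {x : ℝ} (hx : 0 < x) :
    deriv^[2] (fun y : ℝ => y ^ β) x = β * (β - 1) * x ^ (β - 2) := by
  have hev : deriv (fun y : ℝ => y ^ β) =ᶠ[nhds x] fun y => β * y ^ (β - 1) := by
    filter_upwards [Ioi_mem_nhds hx] with y hy
    exact Real.deriv_rpow_const y β
  show deriv (deriv fun y : ℝ => y ^ β) x = _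
  rw [hev.deriv_eq]
  have hd : HasDerivAt (fun y : ℝ => β * y ^ (β - 1)) (β * ((β-1) * x ^ (β-1-1))) x :=
    (Real.hasDerivAt_rpow_const (Or.inl hx.ne')).const_mul β
  rw [show β - 1 - 1 = β - 2 by ring] at hd
  rw [hd.deriv]; ring

lemma strictConvexOn_rpow_Ioi {β : ℝ} (hβ : 0 < β * (β - 1)) :
    StrictConvexOn ℝ (Ioi (0:ℝ)) fun y : ℝ => y ^ β := by
  apply strictConvexOn_of_deriv2_pos (convex_Ioi 0)
  · exact fun y hy => (Real.continuousAt_rpow_const y β (Or.inl (ne_of_gt hy))).continuousWithinAt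
  · intro y hy
    rw [interior_Ioi] at hy
    rw [deriv2_rpow β hy]
    exact mul_pos hβ (Real.rpow_pos_of_pos hy _)

lemma strictConcaveOn_rpow_Ioi {β : ℝ} (hβ : β * (β - 1) < 0) :
    StrictConcaveOn ℝ (Ioi (0:ℝ)) fun y : ℝ => y ^ β := by
  apply strictConcaveOn_of_deriv2_neg (convex_Ioi 0)
  · exact fun y hy => (Real.continuousAt_rpow_const y β (Or.inl (ne_of_gt hy))).continuousWithinAt
  · intro y hy
    rw [interior_Ioi] at hy
    rw [deriv2_rpow β hy]
    exact mul_neg_of_neg_of_pos hβ (Real.rpow_pos_of_pos hy _)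

lemma StrictConvexOn.sd {f : ℝ → ℝ} {D : Set ℝ} (hf : StrictConvexOn ℝ D f) {x : ℝ}
    (h0 : x ∈ D) (h2 : x + 2 ∈ D) : 2 * f (x + 1) < f x + f (x + 2) := by
  have h := hf.2 h0 h2 (by linarith) (by norm_num : (0:ℝ) < 1/2) (by norm_num : (0:ℝ) < 1/2)
    (by norm_num)
  simp only [smul_eq_mul] at h
  rw [show (1/2 : ℝ) * x + (1/2 : ℝ) * (x + 2) = x + 1 by ring] at h
  linarith

lemma StrictConcaveOn.sd {f : ℝ → ℝ} {D : Set ℝ} (hf : StrictConcaveOn ℝ D f) {x : ℝ}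
    (h0 : x ∈ D) (h2 : x + 2 ∈ D) : f x + f (x + 2) < 2 * f (x + 1) := by
  have h := hf.2 h0 h2 (by linarith) (by norm_num : (0:ℝ) < 1/2) (by norm_num : (0:ℝ) < 1/2)
    (by norm_num)
  simp only [smul_eq_mul] at h
  rw [show (1/2 : ℝ) * x + (1/2 : ℝ) * (x + 2) = x + 1 by ring] at h
  linarith

noncomputable def Ffun (α x : ℝ) : ℝ := (x + 2) ^ α - 2 * (x + 1) ^ α + x ^ α

lemma Ffun_continuousOn {α : ℝ} (hα : 0 < α) : ContinuousOn (Ffun α) (Ici (0:ℝ)) := by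
  apply ContinuousOn.add
  apply ContinuousOn.sub
  · exact ((continuous_id.add continuous_const).continuousOn).rpow_const
      fun x _ => Or.inr hα.le
  · exact (continuousOn_const.mul (((continuous_id.add continuous_const).continuousOn).rpow_const
      fun x _ => Or.inr hα.le))
  · exact continuousOn_id.rpow_const fun x _ => Or.inr hα.le

lemma hasDerivAt_Ffun {α x : ℝ} (hα : 1 ≤ α) :
    HasDerivAt (Ffun α)
      (α * (x + 2) ^ (α-1) - 2 * (α * (x + 1) ^ (α-1)) + α * x ^ (α-1)) x := by
  have h2 : HasDerivAt (fun y : ℝ => (y + 2) ^ α) (α * (x + 2) ^ (α-1) * 1) x :=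
    (Real.hasDerivAt_rpow_const (Or.inr hα)).comp x ((hasDerivAt_id x).add_const 2)
  have h1 : HasDerivAt (fun y : ℝ => (y + 1) ^ α) (α * (x + 1) ^ (α-1) * 1) x :=
    (Real.hasDerivAt_rpow_const (Or.inr hα)).comp x ((hasDerivAt_id x).add_const 1)
  have h0 : HasDerivAt (fun y : ℝ => y ^ α) (α * x ^ (α-1)) x :=
    Real.hasDerivAt_rpow_const (Or.inr hα)
  have := (h2.sub (h1.const_mul 2)).add h0
  simp only [mul_one] at this
  exact this

lemma deriv_Ffun {α x : ℝ} (hα : 1 ≤ α) :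
    deriv (Ffun α) x = α * ((x+2)^(α-1) - 2*(x+1)^(α-1) + x^(α-1)) := by
  rw [(hasDerivAt_Ffun hα).deriv]; ring

lemma deriv2_Ffun {α : ℝ} {x : ℝ} (hα : 1 ≤ α) (hx : 0 < x) :
    deriv^[2] (Ffun α) x
      = α * (α-1) * ((x+2)^(α-2) - 2*(x+1)^(α-2) + x^(α-2)) := by
  have hev : deriv (Ffun α) =ᶠ[nhds x]
      fun y => α * ((y+2)^(α-1) - 2*(y+1)^(α-1) + y^(α-1)) := by
    filter_upwards with y using deriv_Ffun hα
  show deriv (deriv (Ffun α)) x = _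
  rw [hev.deriv_eq]
  have h2 : HasDerivAt (fun y : ℝ => (y + 2) ^ (α-1)) ((α-1) * (x + 2) ^ (α-1-1) * 1) x :=
    by have hc := (Real.hasDerivAt_rpow_const (x := x + 2) (p := α - 1) (Or.inl (by linarith : (0:ℝ) < x + 2).ne')).comp x
                  ((hasDerivAt_id x).add_const 2); exact hc
  have h1 : HasDerivAt (fun y : ℝ => (y + 1) ^ (α-1)) ((α-1) * (x + 1) ^ (α-1-1) * 1) x :=
    by have hc := (Real.hasDerivAt_rpow_const (x := x + 1) (p := α - 1) (Or.inl (by linarith : (0:ℝ) < x + 1).ne')).comp x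
                  ((hasDerivAt_id x).add_const 1); exact hc
  have h0 : HasDerivAt (fun y : ℝ => y ^ (α-1)) ((α-1) * x ^ (α-1-1)) x :=
    Real.hasDerivAt_rpow_const (Or.inl hx.ne')
  have hd := ((h2.sub (h1.const_mul 2)).add h0).const_mul α
  rw [show α - 1 - 1 = α - 2 by ring] at hd
  refine hd.deriv.trans ?_; ring

lemma Ffun_strictConvexOn (h1 : 1 < α) (h2 : α < 2) :
    StrictConvexOn ℝ (Ici (0:ℝ)) (Ffun α) := by
  apply strictConvexOn_of_deriv2_pos (convex_Ici 0) (Ffun_continuousOn (by linarith))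
  intro x hx
  rw [interior_Ici] at hx
  have hx' : (0:ℝ) < x := hx
  rw [deriv2_Ffun h1.le hx]
  have hc := strictConvexOn_rpow_Ioi (β := α - 2)
    (mul_pos_of_neg_of_neg (by linarith) (by linarith))
  have hsd := hc.sd (mem_Ioi.mpr hx) (mem_Ioi.mpr (by linarith))
  have : (0:ℝ) < (x+2)^(α-2) - 2*(x+1)^(α-2) + x^(α-2) := by linarith
  exact mul_pos (mul_pos (by linarith) (by linarith)) this

lemma Ffun_strictConcaveOn (h1 : 2 < α) (h2 : α < 3) :
    StrictConcaveOn ℝ (Ici (0:ℝ)) (Ffun α) := by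
  apply strictConcaveOn_of_deriv2_neg (convex_Ici 0) (Ffun_continuousOn (by linarith))
  intro x hx
  rw [interior_Ici] at hx
  have hx' : (0:ℝ) < x := hx
  rw [deriv2_Ffun (by linarith) hx]
  have hc := strictConcaveOn_rpow_Ioi (β := α - 2)
    (mul_neg_of_pos_of_neg (by linarith) (by linarith))
  have hsd := hc.sd (mem_Ioi.mpr hx) (mem_Ioi.mpr (by linarith))
  have : (x+2)^(α-2) - 2*(x+1)^(α-2) + x^(α-2) < 0 := by linarith
  exact mul_neg_of_pos_of_neg (mul_pos (by linarith) (by linarith)) this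

lemma Ffun_strictAntiOn (h1 : 1 < α) (h2 : α < 2) :
    StrictAntiOn (Ffun α) (Ici (0:ℝ)) := by
  apply strictAntiOn_of_deriv_neg (convex_Ici 0) (Ffun_continuousOn (by linarith))
  intro x hx
  rw [interior_Ici] at hx
  have hx' : (0:ℝ) < x := hx
  rw [deriv_Ffun h1.le]
  have hc := strictConcaveOn_rpow_Ioi (β := α - 1)
    (mul_neg_of_pos_of_neg (by linarith) (by linarith))
  have hsd := hc.sd (mem_Ioi.mpr hx) (mem_Ioi.mpr (by linarith))
  have : (x+2)^(α-1) - 2*(x+1)^(α-1) + x^(α-1) < 0 := by linarith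
  exact mul_neg_of_pos_of_neg (by linarith) this

lemma Ffun_strictMonoOn (h1 : 2 < α) (h2 : α < 3) :
    StrictMonoOn (Ffun α) (Ici (0:ℝ)) := by
  apply strictMonoOn_of_deriv_pos (convex_Ici 0) (Ffun_continuousOn (by linarith))
  intro x hx
  rw [interior_Ici] at hx
  have hx' : (0:ℝ) < x := hx
  rw [deriv_Ffun (by linarith)]
  have hc := strictConvexOn_rpow_Ioi (β := α - 1)
    (mul_pos (by linarith) (by linarith))
  have hsd := hc.sd (mem_Ioi.mpr hx) (mem_Ioi.mpr (by linarith))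
  have : (0:ℝ) < (x+2)^(α-1) - 2*(x+1)^(α-1) + x^(α-1) := by linarith
  exact mul_pos (by linarith) this

lemma rpow_num (x : ℝ) (n : ℕ) : x ^ ((n : ℝ)) = x ^ n := Real.rpow_natCast x n

lemma two_rpow_two : (2:ℝ) ^ (2:ℝ) = 4 := by
  rw [show (2:ℝ) ^ (2:ℝ) = (2:ℝ) ^ (((2:ℕ)):ℝ) by norm_num, rpow_num]; norm_num

lemma tFn_zero {s : ℝ} (h : 3 - 2 * s ≠ 0) : tFn s 0 = 2 * (2:ℝ) ^ (3 - 2*s) - 8 := by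
  simp only [tFn, Nat.cast_zero]
  rw [show |(0:ℝ)-2| = 2 by norm_num, show |(0:ℝ)-1| = 1 by norm_num,
      show (0:ℝ)+1 = 1 by norm_num, show (0:ℝ)+2 = 2 by norm_num,
      Real.one_rpow, Real.zero_rpow h]
  ring

lemma tFn_one {s : ℝ} (h : 3 - 2 * s ≠ 0) :
    tFn s 1 = 7 + (3:ℝ) ^ (3-2*s) - 4 * (2:ℝ) ^ (3-2*s) := by
  simp only [tFn, Nat.cast_one]
  rw [show |(1:ℝ)-2| = 1 by norm_num, show |(1:ℝ)-1| = 0 by norm_num,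
      show (1:ℝ)+1 = 2 by norm_num, show (1:ℝ)+2 = 3 by norm_num,
      Real.one_rpow, Real.zero_rpow h]
  ring

lemma t1_eq {s : ℝ} : t1 s = 7 + (3:ℝ) ^ (3-2*s) - 4 * (2:ℝ) ^ (3-2*s) := by
  unfold t1
  rw [show (5 - 2*s) = 2 + (3 - 2*s) by ring, Real.rpow_add two_pos, two_rpow_two]

lemma tFn_eq {s : ℝ} {p : ℕ} (hp : 2 ≤ p) :
    tFn s p = Ffun (3-2*s) ((p:ℝ)-2) - 2 * Ffun (3-2*s) ((p:ℝ)-1) + Ffun (3-2*s) (p:ℝ) := by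
  have hp2 : (2:ℝ) ≤ (p:ℝ) := by exact_mod_cast hp
  unfold tFn Ffun
  rw [abs_of_nonneg (by linarith : (0:ℝ) ≤ (p:ℝ)-2),
      abs_of_nonneg (by linarith : (0:ℝ) ≤ (p:ℝ)-1),
      show (p:ℝ)-2+2 = (p:ℝ) by ring, show (p:ℝ)-2+1 = (p:ℝ)-1 by ring,
      show (p:ℝ)-1+2 = (p:ℝ)+1 by ring, show (p:ℝ)-1+1 = (p:ℝ) by ring]
  ring

lemma Acoef_neg {s : ℝ} (hs : 1/2 < s) (hs1 : s < 1) : Acoef s < 0 := by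
  unfold Acoef
  have hg : 0 < Real.Gamma (4-2*s) := Real.Gamma_pos_of_pos (by linarith)
  have hpi := Real.pi_pos
  have hc : Real.cos (s*Real.pi) < 0 :=
    Real.cos_neg_of_pi_div_two_lt_of_lt (by nlinarith) (by nlinarith)
  exact one_div_neg.mpr (mul_neg_of_pos_of_neg (by positivity) hc)

lemma Acoef_pos {s : ℝ} (hs0 : 0 < s) (hs : s < 1/2) : 0 < Acoef s := by
  unfold Acoef
  have hg : 0 < Real.Gamma (4-2*s) := Real.Gamma_pos_of_pos (by linarith)
  have hpi := Real.pi_pos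
  have hc : 0 < Real.cos (s*Real.pi) :=
    Real.cos_pos_of_mem_Ioo ⟨by nlinarith, by nlinarith⟩
  exact one_div_pos.mpr (by positivity)

lemma tFn_pos {s : ℝ} (hs : 1/2 < s) (hs1 : s < 1) {p : ℕ} (hp : 2 ≤ p) : 0 < tFn s p := by
  rw [tFn_eq hp]
  have hp2 : (2:ℝ) ≤ (p:ℝ) := by exact_mod_cast hp
  have hcv := Ffun_strictConvexOn (by linarith : 1 < 3-2*s) (by linarith : 3-2*s < 2)
  have hsd := hcv.sd (x := (p:ℝ)-2) (mem_Ici.mpr (by linarith)) (mem_Ici.mpr (by linarith))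
  rw [show (p:ℝ)-2+1 = (p:ℝ)-1 by ring, show (p:ℝ)-2+2 = (p:ℝ) by ring] at hsd
  linarith

lemma tFn_neg {s : ℝ} (hs0 : 0 < s) (hs : s < 1/2) {p : ℕ} (hp : 2 ≤ p) : tFn s p < 0 := by
  rw [tFn_eq hp]
  have hp2 : (2:ℝ) ≤ (p:ℝ) := by exact_mod_cast hp
  have hcv := Ffun_strictConcaveOn (by linarith : 2 < 3-2*s) (by linarith : 3-2*s < 3)
  have hsd := hcv.sd (x := (p:ℝ)-2) (mem_Ici.mpr (by linarith)) (mem_Ici.mpr (by linarith))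
  rw [show (p:ℝ)-2+1 = (p:ℝ)-1 by ring, show (p:ℝ)-2+2 = (p:ℝ) by ring] at hsd
  linarith

lemma sum_tFn {s : ℝ} (hs0 : 0 < s) (hs1 : s < 1) (M : ℕ) (hM : 1 ≤ M) :
    ∑ p ∈ Finset.Icc 1 M, tFn s p
      = 4 - (2:ℝ)^(3-2*s) + (Ffun (3-2*s) (M:ℝ) - Ffun (3-2*s) ((M:ℝ)-1)) := by
  have h3 : (3:ℝ) - 2*s ≠ 0 := by linarith
  induction M, hM using Nat.le_induction with
  | base =>
    rw [show Finset.Icc 1 1 = {1} by rfl, Finset.sum_singleton, tFn_one h3]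
    have hF1 : Ffun (3-2*s) ((1:ℕ):ℝ) = (3:ℝ)^(3-2*s) - 2*(2:ℝ)^(3-2*s) + 1 := by
      unfold Ffun
      simp only [Nat.cast_one]
      rw [show (1:ℝ)+2 = 3 by norm_num, show (1:ℝ)+1 = 2 by norm_num, Real.one_rpow]
    have hF0 : Ffun (3-2*s) (((1:ℕ):ℝ)-1) = (2:ℝ)^(3-2*s) - 2 := by
      simp only [Nat.cast_one]
      rw [show (1:ℝ)-1 = 0 by norm_num]
      unfold Ffun
      rw [show (0:ℝ)+2 = 2 by norm_num, show (0:ℝ)+1 = 1 by norm_num, Real.one_rpow,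
          Real.zero_rpow h3]
      ring
    rw [hF1, hF0]; push_cast; ring
  | succ M hM ih =>
    rw [Finset.sum_Icc_succ_top (by omega) _, ih, tFn_eq (by omega : 2 ≤ M + 1)]
    push_cast
    rw [show (M:ℝ)+1-2 = (M:ℝ)-1 by ring, show (M:ℝ)+1-1 = (M:ℝ) by ring]
    ring

lemma row_sum (f : ℕ → ℝ) (n k : ℕ) (hk : k < n) :
    ∑ j ∈ Finset.range n, f ((k:ℤ) - (j:ℤ)).natAbs
      = f 0 + (∑ p ∈ Finset.Icc 1 k, f p) + ∑ p ∈ Finset.Icc 1 (n - 1 - k), f p := by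
  have hsplit : ∑ j ∈ Finset.range (k+1), f ((k:ℤ) - (j:ℤ)).natAbs
      + ∑ j ∈ Finset.Ico (k+1) n, f ((k:ℤ) - (j:ℤ)).natAbs
      = ∑ j ∈ Finset.range n, f ((k:ℤ) - (j:ℤ)).natAbs := by
    rw [Finset.range_eq_Ico, Finset.range_eq_Ico]
    exact Finset.sum_Ico_consecutive (fun j => f ((k:ℤ) - (j:ℤ)).natAbs) (Nat.zero_le (k+1)) (by omega : k + 1 ≤ n)
  have h1 : ∑ j ∈ Finset.range (k+1), f ((k:ℤ) - (j:ℤ)).natAbs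
      = f 0 + ∑ p ∈ Finset.Icc 1 k, f p := by
    have e1 : ∀ j ∈ Finset.range (k+1), f ((k:ℤ) - (j:ℤ)).natAbs = f (k + 1 - 1 - j) := by
      intro j hj
      have hj' : j ≤ k := Nat.lt_succ_iff.mp (Finset.mem_range.mp hj)
      congr 1
      omega
    rw [Finset.sum_congr rfl e1, Finset.sum_range_reflect, Finset.sum_range_succ',
        show Finset.Icc 1 k = Finset.Ico 1 (k+1) by rfl, Finset.sum_Ico_eq_sum_range]
    simp [add_comm]
  have h2 : ∑ j ∈ Finset.Ico (k+1) n, f ((k:ℤ) - (j:ℤ)).natAbs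
      = ∑ p ∈ Finset.Icc 1 (n - 1 - k), f p := by
    rw [Finset.sum_Ico_eq_sum_range,
        show Finset.Icc 1 (n-1-k) = Finset.Ico 1 (n-1-k+1) by rfl, Finset.sum_Ico_eq_sum_range,
        show n-1-k+1-1 = n-(k+1) by omega]
    apply Finset.sum_congr rfl
    intro i hi
    congr 1
    omega
  rw [← hsplit, h1, h2]


lemma row_neg {s : ℝ} (hs : 1/2 < s) (hs1 : s < 1) (n k : ℕ) (hk : k < n) :
    ∑ j ∈ Finset.range n, tFn s ((k:ℤ)-(j:ℤ)).natAbs < 0 := by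
  have h3 : (3:ℝ) - 2*s ≠ 0 := by linarith
  have hα1 : 1 < 3-2*s := by linarith
  have hα2 : 3-2*s < 2 := by linarith
  rw [row_sum _ n k hk]
  have h2lt4 : (2:ℝ)^(3-2*s) < 4 := by
    have := Real.rpow_lt_rpow_of_exponent_lt (by norm_num : (1:ℝ) < 2) hα2
    rwa [two_rpow_two] at this
  have hD : ∀ M : ℕ, 1 ≤ M → Ffun (3-2*s) (M:ℝ) < Ffun (3-2*s) ((M:ℝ)-1) := by
    intro M hM
    have h1M : (1:ℝ) ≤ (M:ℝ) := by exact_mod_cast hM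
    exact Ffun_strictAntiOn hα1 hα2 (mem_Ici.mpr (by linarith)) (mem_Ici.mpr (by linarith))
      (by linarith)
  rw [tFn_zero h3]
  rcases Nat.eq_zero_or_pos k with hk0 | hk1 <;>
    rcases Nat.eq_zero_or_pos (n-1-k) with hm0 | hm1
  · subst hk0; rw [hm0]; simp; linarith
  · subst hk0
    rw [sum_tFn (by linarith) (by linarith) _ hm1]
    rw [show Finset.Icc 1 0 = ∅ by rfl, Finset.sum_empty]
    have := hD _ hm1
    linarith
  · rw [hm0, sum_tFn (by linarith) (by linarith) _ hk1]
    rw [show Finset.Icc 1 0 = ∅ by rfl, Finset.sum_empty]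
    have := hD _ hk1
    linarith
  · rw [sum_tFn (by linarith) (by linarith) _ hk1, sum_tFn (by linarith) (by linarith) _ hm1]
    have := hD _ hk1
    have := hD _ hm1
    linarith

lemma row_pos {s : ℝ} (hs0 : 0 < s) (hs : s < 1/2) (n k : ℕ) (hk : k < n) :
    0 < ∑ j ∈ Finset.range n, tFn s ((k:ℤ)-(j:ℤ)).natAbs := by
  have h3 : (3:ℝ) - 2*s ≠ 0 := by linarith
  have hα1 : 2 < 3-2*s := by linarith
  have hα2 : 3-2*s < 3 := by linarith
  rw [row_sum _ n k hk]
  have h2gt4 : 4 < (2:ℝ)^(3-2*s) := by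
    have := Real.rpow_lt_rpow_of_exponent_lt (by norm_num : (1:ℝ) < 2) hα1
    rwa [two_rpow_two] at this
  have hD : ∀ M : ℕ, 1 ≤ M → Ffun (3-2*s) ((M:ℝ)-1) < Ffun (3-2*s) (M:ℝ) := by
    intro M hM
    have h1M : (1:ℝ) ≤ (M:ℝ) := by exact_mod_cast hM
    exact Ffun_strictMonoOn hα1 hα2 (mem_Ici.mpr (by linarith)) (mem_Ici.mpr (by linarith))
      (by linarith)
  rw [tFn_zero h3]
  rcases Nat.eq_zero_or_pos k with hk0 | hk1 <;>
    rcases Nat.eq_zero_or_pos (n-1-k) with hm0 | hm1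
  · subst hk0; rw [hm0]; simp; linarith
  · subst hk0
    rw [sum_tFn (by linarith) (by linarith) _ hm1]
    rw [show Finset.Icc 1 0 = ∅ by rfl, Finset.sum_empty]
    have := hD _ hm1
    linarith
  · rw [hm0, sum_tFn (by linarith) (by linarith) _ hk1]
    rw [show Finset.Icc 1 0 = ∅ by rfl, Finset.sum_empty]
    have := hD _ hk1
    linarith
  · rw [sum_tFn (by linarith) (by linarith) _ hk1, sum_tFn (by linarith) (by linarith) _ hm1]
    have := hD _ hk1
    have := hD _ hm1
    linarith

noncomputable def psi (x : ℝ) : ℝ := 7 * (2:ℝ) ^ (-x) + (3/2:ℝ) ^ x - 4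
noncomputable def psi' (x : ℝ) : ℝ :=
  -(7 * Real.log 2) * (2:ℝ) ^ (-x) + Real.log (3/2) * (3/2:ℝ) ^ x

lemma hasDerivAt_two_rpow_neg (x : ℝ) :
    HasDerivAt (fun x : ℝ => (2:ℝ) ^ (-x)) (-((2:ℝ) ^ (-x) * Real.log 2)) x := by
  have h := (Real.hasStrictDerivAt_const_rpow (by norm_num : (0:ℝ) < 2) (-x)).hasDerivAt
  have := h.comp x ((hasDerivAt_id x).neg)
  simp at this
  exact this

lemma hasDerivAt_psi (x : ℝ) : HasDerivAt psi (psi' x) x := by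
  have h1 := (hasDerivAt_two_rpow_neg x).const_mul 7
  have h2 := (Real.hasStrictDerivAt_const_rpow (by norm_num : (0:ℝ) < 3/2) x).hasDerivAt
  have := (h1.add h2).sub_const 4
  refine this.congr_deriv ?_
  unfold psi'
  ring

lemma hasDerivAt_psi' (x : ℝ) :
    HasDerivAt psi'
      (7 * Real.log 2 * Real.log 2 * (2:ℝ) ^ (-x)
        + Real.log (3/2) * Real.log (3/2) * (3/2:ℝ) ^ x) x := by
  have h1 := (hasDerivAt_two_rpow_neg x).const_mul (-(7 * Real.log 2))
  have h2 := ((Real.hasStrictDerivAt_const_rpow (by norm_num : (0:ℝ) < 3/2) x).hasDerivAt).const_mul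
    (Real.log (3/2))
  have := h1.add h2
  refine this.congr_deriv ?_
  ring

lemma psi'_strictMono : StrictMono psi' := by
  apply strictMono_of_deriv_pos
  intro x
  rw [(hasDerivAt_psi' x).deriv]
  have hl2 : 0 < Real.log 2 := Real.log_pos (by norm_num)
  have hl32 : 0 < Real.log (3/2) := Real.log_pos (by norm_num)
  have p1 : (0:ℝ) < (2:ℝ) ^ (-x) := Real.rpow_pos_of_pos (by norm_num) _
  have p2 : (0:ℝ) < (3/2:ℝ) ^ x := Real.rpow_pos_of_pos (by norm_num) _
  positivity

lemma two_rpow_neg_two : (2:ℝ) ^ (-2:ℝ) = 1/4 := by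
  rw [show (-2:ℝ) = ((-2:ℤ):ℝ) by norm_num, Real.rpow_intCast]
  norm_num

lemma threehalf_rpow_two : (3/2:ℝ) ^ (2:ℝ) = 9/4 := by
  rw [show (2:ℝ) = (((2:ℕ)):ℝ) by norm_num, Real.rpow_natCast]
  norm_num

lemma psi_two : psi 2 = 0 := by
  unfold psi
  rw [two_rpow_neg_two, threehalf_rpow_two]
  norm_num

lemma psi'_two_neg : psi' 2 < 0 := by
  unfold psi'
  rw [two_rpow_neg_two, threehalf_rpow_two]
  have h : 9 * Real.log (3/2) < 7 * Real.log 2 := by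
    have hlog : Real.log ((3:ℝ)^(9:ℕ)) < Real.log ((2:ℝ)^(16:ℕ)) :=
      Real.log_lt_log (by positivity) (by norm_num)
    rw [Real.log_pow, Real.log_pow] at hlog
    rw [Real.log_div (by norm_num) (by norm_num)]
    push_cast at hlog
    linarith
  linarith

lemma psi_pos {a : ℝ} (ha1 : 1 < a) (ha2 : a < 2) : 0 < psi a := by
  obtain ⟨ξ, hξ, hslope⟩ := exists_hasDerivAt_eq_slope psi psi' ha2
    (fun x _ => (hasDerivAt_psi x).continuousAt.continuousWithinAt)
    (fun x _ => hasDerivAt_psi x)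
  have h1 : psi' ξ < psi' 2 := psi'_strictMono hξ.2
  have h2 : psi' ξ < 0 := h1.trans psi'_two_neg
  rw [psi_two] at hslope
  have h2a : 0 < 2 - a := by linarith
  have : (0 - psi a) / (2 - a) < 0 := hslope ▸ h2
  have hneg : 0 - psi a < 0 := by
    by_contra hcon
    push_neg at hcon
    have := div_nonneg hcon h2a.le
    linarith
  linarith

lemma t1_pos {s : ℝ} (hs : 1/2 < s) (hs1 : s < 1) : 0 < t1 s := by
  have ha1 : 1 < 3 - 2*s := by linarith
  have ha2 : 3 - 2*s < 2 := by linarith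
  have hpsi := psi_pos ha1 ha2
  have key : t1 s = (2:ℝ) ^ (3-2*s) * psi (3-2*s) := by
    unfold t1 psi
    have e1 : (2:ℝ)^(3-2*s) * (2:ℝ)^(-(3-2*s)) = 1 := by
      rw [← Real.rpow_add (by norm_num : (0:ℝ) < 2)]
      simp
    have e2 : (2:ℝ)^(3-2*s) * (3/2:ℝ)^(3-2*s) = (3:ℝ)^(3-2*s) := by
      rw [← Real.mul_rpow (by norm_num : (0:ℝ) ≤ (2:ℝ)) (by norm_num : (0:ℝ) ≤ (3/2:ℝ))]
      norm_num
    have e3 : (2:ℝ)^(5-2*s) = 4 * (2:ℝ)^(3-2*s) := by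
      rw [show (5 - 2*s) = 2 + (3 - 2*s) by ring, Real.rpow_add (by norm_num : (0:ℝ) < 2),
        show (2:ℝ) ^ (2:ℝ) = 4 by
          rw [show (2:ℝ) = (((2:ℕ)):ℝ) by norm_num, Real.rpow_natCast]; norm_num]
    linear_combination (-7) * e1 - e2 - e3
  rw [key]
  exact mul_pos (Real.rpow_pos_of_pos (by norm_num) _) hpsi

theorem stmt12 (s : ℝ) (hs : s ∈ Set.Ioo (0 : ℝ) 1) (hs' : s ≠ 1 / 2)
    (hrange : 1 / 2 < s ∨ t1 s ≤ 0)
    (h : ℝ) (hh : 0 < h) (N : ℕ) (hN : 2 ≤ N)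
    (S : Matrix (Fin (N - 1)) (Fin (N - 1)) ℝ)
    (hS : ∀ k j, S k j =
      Acoef s * h ^ (1 - 2 * s) * tFn s (((k : ℕ) : ℤ) - ((j : ℕ) : ℤ)).natAbs) :
    (∀ k, 0 < S k k) ∧
    (∀ k j, k ≠ j → S k j ≤ 0) ∧
    (∀ k j : Fin (N - 1), 2 ≤ (((k : ℕ) : ℤ) - ((j : ℕ) : ℤ)).natAbs → S k j < 0) ∧
    (∀ k j : Fin (N - 1), (((k : ℕ) : ℤ) - ((j : ℕ) : ℤ)).natAbs = 1 → t1 s ≠ 0 → S k j < 0) ∧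
    (∀ k, ∑ j ∈ Finset.univ.filter (fun j => j ≠ k), |S k j| < S k k) := by
  obtain ⟨hs0, hs1⟩ := hs
  have h3 : (3:ℝ) - 2*s ≠ 0 := by linarith
  set c := Acoef s * h ^ (1 - 2 * s) with hc
  have hhp : (0:ℝ) < h ^ (1 - 2 * s) := Real.rpow_pos_of_pos hh _
  have ht1eq : tFn s 1 = t1 s := by rw [tFn_one h3, t1_eq]
  have hdiag : ∀ k : Fin (N-1), S k k = c * tFn s 0 := by
    intro k
    rw [hS k k, sub_self]
    rfl
  have hsdd_aux : ∀ k : Fin (N-1),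
      S k k + ∑ j ∈ Finset.univ.filter (fun j => j ≠ k), S k j
        = c * ∑ j ∈ Finset.range (N-1), tFn s (((k:ℕ):ℤ) - (j:ℤ)).natAbs := by
    intro k
    rw [Finset.filter_ne', Finset.add_sum_erase _ _ (Finset.mem_univ k)]
    calc ∑ x : Fin (N-1), S k x
        = ∑ x : Fin (N-1), c * tFn s (((k:ℕ):ℤ) - ((x:ℕ):ℤ)).natAbs :=
          Finset.sum_congr rfl fun j _ => hS k j
      _ = ∑ j ∈ Finset.range (N-1), c * tFn s (((k:ℕ):ℤ) - (j:ℤ)).natAbs :=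
          Fin.sum_univ_eq_sum_range (fun j => c * tFn s (((k:ℕ):ℤ) - (j:ℤ)).natAbs) (N-1)
      _ = c * ∑ j ∈ Finset.range (N-1), tFn s (((k:ℕ):ℤ) - (j:ℤ)).natAbs :=
          (Finset.mul_sum _ _ _).symm
  rcases lt_or_gt_of_ne hs' with hlt | hgt
  · -- s < 1/2
    have hT1 : t1 s ≤ 0 := hrange.resolve_left (by linarith)
    have hcpos : 0 < c := mul_pos (Acoef_pos hs0 hlt) hhp
    have h2gt4 : (4:ℝ) < (2:ℝ)^(3-2*s) := by
      have := Real.rpow_lt_rpow_of_exponent_lt (by norm_num : (1:ℝ) < 2) (by linarith : 2 < 3-2*s)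
      rwa [two_rpow_two] at this
    have ht0 : 0 < tFn s 0 := by rw [tFn_zero h3]; linarith
    have hople : ∀ p : ℕ, 1 ≤ p → tFn s p ≤ 0 := by
      intro p hp
      rcases eq_or_lt_of_le hp with he | h2
      · rw [← he, ht1eq]; exact hT1
      · exact (tFn_neg hs0 hlt h2).le
    have hoffle : ∀ k j : Fin (N-1), k ≠ j → S k j ≤ 0 := by
      intro k j hkj
      rw [hS k j]
      have hne : (k:ℕ) ≠ (j:ℕ) := fun he => hkj (Fin.ext he)
      have hp1 : 1 ≤ (((k:ℕ):ℤ) - ((j:ℕ):ℤ)).natAbs := by omega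
      exact mul_nonpos_iff.mpr (Or.inl ⟨hcpos.le, hople _ hp1⟩)
    refine ⟨?_, hoffle, ?_, ?_, ?_⟩
    · intro k; rw [hdiag k]; exact mul_pos hcpos ht0
    · intro k j hge
      rw [hS k j]
      exact mul_neg_of_pos_of_neg hcpos (tFn_neg hs0 hlt hge)
    · intro k j h1 hne
      rw [hS k j, h1, ht1eq]
      exact mul_neg_of_pos_of_neg hcpos (lt_of_le_of_ne hT1 hne)
    · intro k
      have habs : ∀ j ∈ Finset.univ.filter (fun j => j ≠ k), |S k j| = -S k j :=
        fun j hj => abs_of_nonpos (hoffle k j (Ne.symm (Finset.mem_filter.mp hj).2))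
      rw [Finset.sum_congr rfl habs, Finset.sum_neg_distrib]
      have hpos : 0 < S k k + ∑ j ∈ Finset.univ.filter (fun j => j ≠ k), S k j := by
        rw [hsdd_aux k]
        exact mul_pos hcpos (row_pos hs0 hlt _ _ k.isLt)
      linarith
  · -- 1/2 < s
    have hcneg : c < 0 := mul_neg_of_neg_of_pos (Acoef_neg hgt hs1) hhp
    have h2lt4 : (2:ℝ)^(3-2*s) < 4 := by
      have := Real.rpow_lt_rpow_of_exponent_lt (by norm_num : (1:ℝ) < 2) (by linarith : 3-2*s < 2)
      rwa [two_rpow_two] at this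
    have ht0 : tFn s 0 < 0 := by rw [tFn_zero h3]; linarith
    have ht1 : 0 < tFn s 1 := by rw [ht1eq]; exact t1_pos hgt hs1
    have htp : ∀ p : ℕ, 1 ≤ p → 0 < tFn s p := by
      intro p hp
      rcases eq_or_lt_of_le hp with he | h2
      · rw [← he]; exact ht1
      · exact tFn_pos hgt hs1 h2
    have hoff : ∀ k j : Fin (N-1), k ≠ j → S k j < 0 := by
      intro k j hkj
      rw [hS k j]
      have hne : (k:ℕ) ≠ (j:ℕ) := fun he => hkj (Fin.ext he)
      have hp1 : 1 ≤ (((k:ℕ):ℤ) - ((j:ℕ):ℤ)).natAbs := by omega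
      exact mul_neg_of_neg_of_pos hcneg (htp _ hp1)
    refine ⟨?_, fun k j hkj => (hoff k j hkj).le, ?_, ?_, ?_⟩
    · intro k; rw [hdiag k]; exact mul_pos_of_neg_of_neg hcneg ht0
    · intro k j hge
      rw [hS k j]
      exact mul_neg_of_neg_of_pos hcneg (tFn_pos hgt hs1 hge)
    · intro k j h1 _
      rw [hS k j, h1]
      exact mul_neg_of_neg_of_pos hcneg ht1
    · intro k
      have habs : ∀ j ∈ Finset.univ.filter (fun j => j ≠ k), |S k j| = -S k j :=
        fun j hj => abs_of_nonpos (hoff k j (Ne.symm (Finset.mem_filter.mp hj).2)).le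
      rw [Finset.sum_congr rfl habs, Finset.sum_neg_distrib]
      have hpos : 0 < S k k + ∑ j ∈ Finset.univ.filter (fun j => j ≠ k), S k j := by
        rw [hsdd_aux k]
        exact mul_pos_of_neg_of_neg hcneg (row_neg hgt hs1 _ _ k.isLt)
      linarith
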